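/- Let M ≥ 2 be a natural number, p ∈ (0,1], and let (β_n) be the sequence defined by β_0 = 1 and β_n = M p β_{n-1} - (M-1) p^{2n} for n ≥ 1. Then for all n ≥ 0, β_n = (Mp)^n (1 - ((M-1)p/(M-p)) (1 - (p/M)^n)). -/

import Mathlib

theorem stmt2 (M : ℕ) (hM : 2 ≤ M) (p : ℝ) (hp : 0 < p) (hp1 : p ≤ 1)
    (β : ℕ → ℝ) (h0 : β 0 = 1)
    (hrec : ∀ n : ℕ, 1 ≤ n → β n = (M:ℝ) * p * β (n-1) - ((M:ℝ)-1) * p^(2*n)) :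
    ∀ n : ℕ, β n = ((M:ℝ)*p)^n *
      (1 - (((M:ℝ)-1)*p/((M:ℝ)-p)) * (1 - (p/(M:ℝ))^n)) := by
  have hM2 : (2:ℝ) ≤ (M:ℝ) := by exact_mod_cast hM
  have hM0 : (M:ℝ) ≠ 0 := by linarith
  have hMp : (M:ℝ) - p ≠ 0 := by linarith
  intro n
  induction n with
  | zero => simp [h0]
  | succ n ih =>
    have h := hrec (n+1) (by omega)
    simp only [Nat.add_sub_cancel] at h
    rw [h, ih]
    have hp0 : p ≠ 0 := ne_of_gt hp
    simp only [div_pow]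
    field_simp
    ring
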